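/- Let S > 0, let U ⊆ (0,S] be Lebesgue measurable, and define β : [0,S] → ℝ by β(s) := Leb(U ∩ [0,s]). Then the image β([0,S] \ U) of the complement of U under β has Lebesgue measure zero. (Part (b) of Lemma 5.6.) -/

import Mathlib

open MeasureTheory

/-- The function `β(s) := Leb(U ∩ [0,s])`. -/
noncomputable def betaFun (U : Set ℝ) (s : ℝ) : ℝ :=
  (volume (U ∩ Set.Icc 0 s)).toReal

/-- Part (b) of Lemma 5.6: the image under `β` of the complement of `U`
has Lebesgue measure zero. -/
theorem beta_image_of_complement_null
    (S : ℝ) (hS : 0 < S) (U : Set ℝ) (hU : MeasurableSet U)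
    (hUsub : U ⊆ Set.Ioc 0 S) :
    volume (betaFun U '' (Set.Icc 0 S \ U)) = 0 := by
  open Set in
  show _
  set β := betaFun U with hβ
  have hfin : ∀ s : Set ℝ, s ⊆ U → volume s ≠ ⊤ := by
    intro s hs
    exact ne_top_of_le_ne_top (by simp [Real.volume_Ioc]) <|
      measure_mono (hs.trans hUsub)
  have key : ∀ a b : ℝ, a ≤ b →
      volume (U ∩ Icc 0 b) = volume (U ∩ Icc 0 a) + volume (U ∩ Ioc a b) := by
    intro a b hab
    have hsplit : U ∩ Icc 0 b = (U ∩ Icc 0 a) ∪ (U ∩ Ioc a b) := by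
      ext x
      constructor
      · rintro ⟨hxU, hx0, hxb⟩
        rcases le_or_gt x a with h | h
        · exact Or.inl ⟨hxU, hx0, h⟩
        · exact Or.inr ⟨hxU, h, hxb⟩
      · rintro (⟨hxU, hx0, hxa⟩ | ⟨hxU, hxa, hxb⟩)
        · exact ⟨hxU, hx0, hxa.trans hab⟩
        · exact ⟨hxU, (hUsub hxU).1.le, hxb⟩
    have hdisj : Disjoint (U ∩ Icc 0 a) (U ∩ Ioc a b) := by
      apply Set.disjoint_left.2
      rintro x ⟨_, _, hxa⟩ ⟨_, hax, _⟩
      exact absurd hxa (not_le.2 hax)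
    rw [hsplit, measure_union hdisj (hU.inter measurableSet_Ioc)]
  have hdiff : ∀ a b : ℝ, a ≤ b → β b - β a = (volume (U ∩ Ioc a b)).toReal := by
    intro a b hab
    have := key a b hab
    rw [hβ]
    simp only [betaFun]
    rw [this, ENNReal.toReal_add (hfin _ inter_subset_left) (hfin _ inter_subset_left)]
    ring
  have hmono : Monotone β := by
    intro a b hab
    have := hdiff a b hab
    have h0 : (0:ℝ) ≤ (volume (U ∩ Ioc a b)).toReal := ENNReal.toReal_nonneg
    linarith
  have hlip : LipschitzWith 1 β := by
    apply LipschitzWith.of_dist_le_mul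
    intro a b
    rw [Real.dist_eq, Real.dist_eq]
    simp only [NNReal.coe_one, one_mul]
    wlog hab : b ≤ a generalizing a b
    · rw [abs_sub_comm, abs_sub_comm a b]; exact this b a (le_of_not_ge hab)
    rw [abs_of_nonneg (by linarith [hmono hab]), abs_of_nonneg (by linarith)]
    rw [hdiff b a hab]
    have hle : volume (U ∩ Ioc b a) ≤ ENNReal.ofReal (a - b) := by
      refine le_trans (measure_mono inter_subset_right) ?_
      rw [Real.volume_Ioc]
    calc (volume (U ∩ Ioc b a)).toReal ≤ (ENNReal.ofReal (a - b)).toReal :=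
          ENNReal.toReal_mono ENNReal.ofReal_ne_top hle
      _ = a - b := ENNReal.toReal_ofReal (by linarith)
  have hcont : Continuous β := hlip.continuous
  have hg : ∀ x, hmono.stieltjesFunction x = β x := by
    intro x
    rw [hmono.stieltjesFunction_eq]
    exact hmono.continuousWithinAt_Ioi_iff_rightLim_eq.1 hcont.continuousAt.continuousWithinAt
  have hmeas : hmono.stieltjesFunction.measure = volume.restrict U := by
    refine MeasureTheory.Measure.ext_of_Ioc _ _ ?_
    intro a b hab
    rw [StieltjesFunction.measure_Ioc, hg, hg, hdiff a b hab.le,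
      Measure.restrict_apply measurableSet_Ioc, inter_comm (Ioc a b) U]
    exact ENNReal.ofReal_toReal (hfin _ inter_subset_left)
  -- a.e. derivative is 0 outside U
  have hae : ∀ᵐ x, x ∉ U → HasDerivAt β 0 x := by
    filter_upwards [hmono.ae_hasDerivAt,
      (Measure.rnDeriv_restrict_self volume hU)] with x hx hrn hxU
    rw [hmeas, hrn] at hx
    simpa [indicator_of_notMem hxU] using hx
  set A := Icc 0 S \ U with hA
  set s₁ := A ∩ {x | HasDerivAt β 0 x} with hs₁
  have h1 : volume (β '' s₁) = 0 := by
    have := MeasureTheory.addHaar_image_eq_zero_of_det_fderivWithin_eq_zero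
      (volume : Measure ℝ) (f := β) (s := s₁)
      (f' := fun _ => (0 : ℝ →L[ℝ] ℝ))
      (fun x hx => hx.2.hasFDerivAt.hasFDerivWithinAt.congr_fderiv (by
        ext y; simp))
      (fun x _ => by
        simp only [ContinuousLinearMap.det]
        simp)
    exact this
  have h2 : volume (β '' (A \ s₁)) = 0 := by
    have hnull : volume (A \ s₁) = 0 := by
      apply measure_mono_null _ (ae_iff.1 hae)
      rintro x ⟨⟨hxIcc, hxU⟩, hx2⟩
      simp only [mem_setOf_eq]
      intro h
      exact hx2 ⟨⟨hxIcc, hxU⟩, h hxU⟩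
    have himg := hlip.hausdorffMeasure_image_le (d := 1) zero_le_one (A \ s₁)
    rw [MeasureTheory.hausdorffMeasure_real] at himg
    refine le_antisymm (himg.trans ?_) zero_le
    rw [hnull]
    simp
  refine le_antisymm ?_ zero_le
  calc volume (β '' A) ≤ volume (β '' s₁ ∪ β '' (A \ s₁)) := by
        apply measure_mono
        rw [← image_union]
        apply image_mono
        intro x hx
        by_cases h : x ∈ {x | HasDerivAt β 0 x}
        · exact Or.inl ⟨hx, h⟩
        · exact Or.inr ⟨hx, fun hc => h hc.2⟩
    _ ≤ volume (β '' s₁) + volume (β '' (A \ s₁)) := measure_union_le _ _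
    _ = 0 := by rw [h1, h2, add_zero]
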